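/- Fix integers N, m, s ≥ 1, real numbers Δt and Î₁,…,Î_m, C² Hamiltonians H, h₁,…,h_m : ℝ^N × ℝ^N → ℝ, and C¹ forces F, f₁,…,f_m : ℝ^N × ℝ^N → ℝ^N. Let real coefficients a⁽⁰⁾_{ij}, a⁽¹⁾_{ij}, b⁽⁰⁾_{ij}, b⁽¹⁾_{ij}, b⁽³⁾_{ij}, α_i, β_i (i,j = 1,…,s) satisfy: α_i a⁽⁰⁾_{ij} + α_j a⁽⁰⁾_{ji} = α_i α_j, α_i b⁽⁰⁾_{ij} + β_j a⁽¹⁾_{ji} = α_i β_j, β_i b⁽¹⁾_{ij} + β_j b⁽¹⁾_{ji} = β_i β_j, and β_i b⁽³⁾_{ij} + β_j b⁽³⁾_{ji} = β_i β_j for all i,j. Let U ⊆ ℝ^N × ℝ^N be open and let Q⁽⁰⁾_i, P⁽⁰⁾_i, Q⁽ˡ⁾_i, P⁽ˡ⁾_i (i = 1,…,s, l = 1,…,m) and q₊, p₋ : U → ℝ^N be differentiable maps which, for every (x,y) ∈ U, satisfy the weak Runge–Kutta relations with q_k = x, p_{k+1} = y, p_k = p₋(x,y), q_{k+1} = q₊(x,y).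 Define H⁺_d(x,y) = y·q₊(x,y) − Δt Σ_i α_i ( P⁽⁰⁾_i·∂H/∂p(Q⁽⁰⁾_i,P⁽⁰⁾_i) − H(Q⁽⁰⁾_i,P⁽⁰⁾_i) ) − Σ_r Î_r Σ_i β_i ( P⁽ʳ⁾_i·∂h_r/∂p(Q⁽ʳ⁾_i,P⁽ʳ⁾_i) − h_r(Q⁽ʳ⁾_i,P⁽ʳ⁾_i) ), F⁻_d(x,y) = Δt Σ_i α_i (∂Q⁽⁰⁾_i/∂x)ᵀ F(Q⁽⁰⁾_i,P⁽⁰⁾_i) + Σ_r Î_r Σ_i β_i (∂Q⁽ʳ⁾_i/∂x)ᵀ f_r(Q⁽ʳ⁾_i,P⁽ʳ⁾_i), and F⁺_d(x,y) = Δt Σ_i α_i (∂Q⁽⁰⁾_i/∂y)ᵀ F(Q⁽⁰⁾_i,P⁽⁰⁾_i) + Σ_r Î_r Σ_i β_i (∂Q⁽ʳ⁾_i/∂y)ᵀ f_r(Q⁽ʳ⁾_i,P⁽ʳ⁾_i). Then for all (x,y) ∈ U: D₂H⁺_d(x,y) = q₊(x,y) + F⁺_d(x,y) and D₁H⁺_d(x,y)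 = p₋(x,y) + F⁻_d(x,y). (Pathwise form of Theorem 3.6: the s-stage weak Lagrange–d'Alembert Runge–Kutta method is a stochastic Lagrange–d'Alembert variational integrator.) -/

import Mathlib

/- STATEMENT 2: The s-stage weak Lagrange–d'Alembert Runge–Kutta method is a
   stochastic Lagrange–d'Alembert variational integrator (pathwise form of Theorem 3.6). -/

noncomputable section
open scoped BigOperators

abbrev E (N : ℕ) : Type := EuclideanSpace ℝ (Fin N)

/-- Gradient with respect to the first argument. -/
noncomputable def D1 {N : ℕ} (H : E N × E N → ℝ) (x y : E N) : E N :=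
  gradient (fun x' => H (x', y)) x

/-- Gradient with respect to the second argument. -/
noncomputable def D2 {N : ℕ} (H : E N × E N → ℝ) (x y : E N) : E N :=
  gradient (fun y' => H (x, y')) y

section Aux
open RealInnerProductSpace InnerProductSpace

variable {N : ℕ}

lemma inner_D1 (g : E N × E N → ℝ) (z : E N × E N) (hg : DifferentiableAt ℝ g z) (u : E N) :
    ⟪D1 g z.1 z.2, u⟫ = fderiv ℝ g z (u, 0) := by
  have h1 : HasFDerivAt (fun x' => g (x', z.2))
      ((fderiv ℝ g z).comp (ContinuousLinearMap.inl ℝ (E N) (E N))) z.1 := by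
    have := hg.hasFDerivAt.comp (f := fun e => (e, z.2)) z.1 (hasFDerivAt_prodMk_left z.1 z.2)
    exact this
  rw [D1, gradient, h1.fderiv, toDual_symm_apply]
  rfl

lemma inner_D2 (g : E N × E N → ℝ) (z : E N × E N) (hg : DifferentiableAt ℝ g z) (u : E N) :
    ⟪D2 g z.1 z.2, u⟫ = fderiv ℝ g z (0, u) := by
  have h1 : HasFDerivAt (fun y' => g (z.1, y'))
      ((fderiv ℝ g z).comp (ContinuousLinearMap.inr ℝ (E N) (E N))) z.2 := by
    have := hg.hasFDerivAt.comp (f := fun e => (z.1, e)) z.2 (hasFDerivAt_prodMk_right z.1 z.2)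
    exact this
  rw [D2, gradient, h1.fderiv, toDual_symm_apply]
  rfl

lemma fderiv_two (g : E N × E N → ℝ) (z : E N × E N) (hg : DifferentiableAt ℝ g z)
    (v : E N × E N) :
    fderiv ℝ g z v = ⟪D1 g z.1 z.2, v.1⟫ + ⟪D2 g z.1 z.2, v.2⟫ := by
  rw [inner_D1 g z hg, inner_D2 g z hg]
  rw [show fderiv ℝ g z v = fderiv ℝ g z (v.1,0) + fderiv ℝ g z (0,v.2) by
    rw [← map_add]; congr 1; simp]

lemma fderiv_partial1 (W : E N × E N → E N) (z : E N × E N) (hW : DifferentiableAt ℝ W z) :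
    fderiv ℝ (fun x' => W (x', z.2)) z.1
      = (fderiv ℝ W z).comp (ContinuousLinearMap.inl ℝ (E N) (E N)) := by
  have h1 : HasFDerivAt (fun x' => W (x', z.2))
      ((fderiv ℝ W z).comp (ContinuousLinearMap.inl ℝ (E N) (E N))) z.1 := by
    have := hW.hasFDerivAt.comp (f := fun e => (e, z.2)) z.1 (hasFDerivAt_prodMk_left z.1 z.2)
    exact this
  exact h1.fderiv

lemma fderiv_partial2 (W : E N × E N → E N) (z : E N × E N) (hW : DifferentiableAt ℝ W z) :
    fderiv ℝ (fun y' => W (z.1, y')) z.2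
      = (fderiv ℝ W z).comp (ContinuousLinearMap.inr ℝ (E N) (E N)) := by
  have h1 : HasFDerivAt (fun y' => W (z.1, y'))
      ((fderiv ℝ W z).comp (ContinuousLinearMap.inr ℝ (E N) (E N))) z.2 := by
    have := hW.hasFDerivAt.comp (f := fun e => (z.1, e)) z.2 (hasFDerivAt_prodMk_right z.1 z.2)
    exact this
  exact h1.fderiv

lemma diff_D2 (H : E N × E N → ℝ) (hH : ContDiff ℝ 2 H) :
    Differentiable ℝ (fun w : E N × E N => D2 H w.1 w.2) := by
  have hd : Differentiable ℝ H := hH.differentiable (by norm_num)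
  have key : ∀ w : E N × E N, D2 H w.1 w.2 =
      (toDual ℝ (E N)).symm ((fderiv ℝ H w).comp (ContinuousLinearMap.inr ℝ (E N) (E N))) := by
    intro w
    have h1 : HasFDerivAt (fun y' => H (w.1, y'))
        ((fderiv ℝ H w).comp (ContinuousLinearMap.inr ℝ (E N) (E N))) w.2 := by
      have := (hd w).hasFDerivAt.comp (f := fun e => (w.1, e)) w.2 (hasFDerivAt_prodMk_right w.1 w.2)
      exact this
    rw [D2, gradient, h1.fderiv]
  rw [show (fun w : E N × E N => D2 H w.1 w.2) = fun w =>
      (toDual ℝ (E N)).symm ((fderiv ℝ H w).comp (ContinuousLinearMap.inr ℝ (E N) (E N)))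
    from funext key]
  have h2 : Differentiable ℝ (fderiv ℝ H) := (hH.fderiv_right (m := 1) (by norm_num)).differentiable (by norm_num)
  have h3 : Differentiable ℝ (fun w : E N × E N =>
      (fderiv ℝ H w).comp (ContinuousLinearMap.inr ℝ (E N) (E N))) :=
    (((ContinuousLinearMap.compL ℝ (E N) (E N × E N) ℝ).flip
            (ContinuousLinearMap.inr ℝ (E N) (E N))).differentiable).comp h2
  exact ((toDual ℝ (E N)).symm.toContinuousLinearEquiv.differentiable).comp h3

lemma diff_D1 (H : E N × E N → ℝ) (hH : ContDiff ℝ 2 H) :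
    Differentiable ℝ (fun w : E N × E N => D1 H w.1 w.2) := by
  have hd : Differentiable ℝ H := hH.differentiable (by norm_num)
  have key : ∀ w : E N × E N, D1 H w.1 w.2 =
      (toDual ℝ (E N)).symm ((fderiv ℝ H w).comp (ContinuousLinearMap.inl ℝ (E N) (E N))) := by
    intro w
    have h1 : HasFDerivAt (fun x' => H (x', w.2))
        ((fderiv ℝ H w).comp (ContinuousLinearMap.inl ℝ (E N) (E N))) w.1 := by
      have := (hd w).hasFDerivAt.comp (f := fun e => (e, w.2)) w.1 (hasFDerivAt_prodMk_left w.1 w.2)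
      exact this
    rw [D1, gradient, h1.fderiv]
  rw [show (fun w : E N × E N => D1 H w.1 w.2) = fun w =>
      (toDual ℝ (E N)).symm ((fderiv ℝ H w).comp (ContinuousLinearMap.inl ℝ (E N) (E N)))
    from funext key]
  have h2 : Differentiable ℝ (fderiv ℝ H) := (hH.fderiv_right (m := 1) (by norm_num)).differentiable (by norm_num)
  have h3 : Differentiable ℝ (fun w : E N × E N =>
      (fderiv ℝ H w).comp (ContinuousLinearMap.inl ℝ (E N) (E N))) :=
    (((ContinuousLinearMap.compL ℝ (E N) (E N × E N) ℝ).flip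
            (ContinuousLinearMap.inl ℝ (E N) (E N))).differentiable).comp h2
  exact ((toDual ℝ (E N)).symm.toContinuousLinearEquiv.differentiable).comp h3

end Aux

section Alg
open RealInnerProductSpace

variable {N : ℕ}


lemma exp3L {k : ℕ} (p q u : E N) (t : ℝ) (c : Fin k → ℝ) (W : Fin k → E N) :
    ⟪p + t • q + ∑ r, c r • W r, u⟫ = ⟪p, u⟫ + t * ⟪q, u⟫ + ∑ r, c r * ⟪W r, u⟫ := by
  rw [inner_add_left, inner_add_left, real_inner_smul_left, sum_inner]
  simp only [real_inner_smul_left]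

lemma exp3R {k : ℕ} (p q u : E N) (t : ℝ) (c : Fin k → ℝ) (W : Fin k → E N) :
    ⟪u, p + t • q + ∑ r, c r • W r⟫ = ⟪u, p⟫ + t * ⟪u, q⟫ + ∑ r, c r * ⟪u, W r⟫ := by
  rw [inner_add_right, inner_add_right, real_inner_smul_right, inner_sum]
  simp only [real_inner_smul_right]

lemma exp4L {k : ℕ} (p q w0 u : E N) (t c0 : ℝ) (S : Finset (Fin k)) (c : Fin k → ℝ)
    (W : Fin k → E N) :
    ⟪p + t • q + c0 • w0 + ∑ r ∈ S, c r • W r, u⟫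
      = ⟪p, u⟫ + t * ⟪q, u⟫ + c0 * ⟪w0, u⟫ + ∑ r ∈ S, c r * ⟪W r, u⟫ := by
  rw [inner_add_left, inner_add_left, inner_add_left, real_inner_smul_left,
    real_inner_smul_left, sum_inner]
  simp only [real_inner_smul_left]

lemma exp4R {k : ℕ} (p q w0 u : E N) (t c0 : ℝ) (S : Finset (Fin k)) (c : Fin k → ℝ)
    (W : Fin k → E N) :
    ⟪u, p + t • q + c0 • w0 + ∑ r ∈ S, c r • W r⟫
      = ⟪u, p⟫ + t * ⟪u, q⟫ + c0 * ⟪u, w0⟫ + ∑ r ∈ S, c r * ⟪u, W r⟫ := by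
  rw [inner_add_right, inner_add_right, inner_add_right, real_inner_smul_right,
    real_inner_smul_right, inner_sum]
  simp only [real_inner_smul_right]

lemma e0h {m : ℕ} (pm v1 GA PA : E N) (Gb Pb : Fin m → E N) (t : ℝ) (I : Fin m → ℝ) :
    ⟪pm + t • GA + ∑ r, I r • Gb r, v1 + t • PA + ∑ r, I r • Pb r⟫
      = ⟪pm, v1⟫ + t * ⟪pm, PA⟫ + ∑ r, I r * ⟪pm, Pb r⟫
        + t * ⟪GA, v1⟫ + ∑ r, I r * ⟪Gb r, v1⟫
        + t * t * ⟪GA, PA⟫ + ∑ r, (t * I r) * ⟪GA, Pb r⟫ + ∑ r, (t * I r) * ⟪Gb r, PA⟫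
        + ∑ r, ∑ ρ, (I r * I ρ) * ⟪Gb r, Pb ρ⟫ := by
  rw [exp3L (u := v1 + t • PA + ∑ r, I r • Pb r) pm GA t I Gb,
    exp3R v1 PA pm t I Pb, exp3R v1 PA GA t I Pb]
  have hrest : ∀ r : Fin m, ⟪Gb r, v1 + t • PA + ∑ ρ, I ρ • Pb ρ⟫
      = ⟪Gb r, v1⟫ + t * ⟪Gb r, PA⟫ + ∑ ρ, I ρ * ⟪Gb r, Pb ρ⟫ := fun r =>
    exp3R v1 PA (Gb r) t I Pb
  simp only [hrest, mul_add, Finset.mul_sum, Finset.sum_add_distrib]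
  have h1 : ∀ x, I x * (t * ⟪Gb x, PA⟫) = t * I x * ⟪Gb x, PA⟫ := fun x => by ring
  simp only [h1, ← mul_assoc]
  ring

lemma main2h {s m : ℕ} (t : ℝ) (I : Fin m → ℝ) (α : Fin s → ℝ)
    (X1 X2 Y1 Y2 : Fin s → ℝ) (Z1 Z2 : Fin m → Fin s → ℝ) :
    t * ∑ i, α i * ((X1 i + t * Y1 i + ∑ r, I r * Z1 r i)
        + (X2 i + t * Y2 i + ∑ r, I r * Z2 r i))
      = t * ∑ i, α i * X1 i + t * ∑ i, α i * X2 i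
        + t * t * ((∑ i, α i * Y1 i) + (∑ i, α i * Y2 i))
        + ∑ r, t * I r * (∑ i, α i * Z1 r i) + ∑ r, t * I r * (∑ i, α i * Z2 r i) := by
  simp only [mul_add, Finset.mul_sum, Finset.sum_add_distrib]
  have h1 : ∀ (Y : Fin s → ℝ) i, t * (α i * (t * Y i)) = t * t * (α i * Y i) :=
    fun Y i => by ring
  have h2 : ∀ (Z : Fin m → Fin s → ℝ),
      ∑ x : Fin s, ∑ i : Fin m, t * (α x * (I i * Z i x))
        = ∑ x : Fin m, ∑ i : Fin s, t * I x * (α i * Z x i) := by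
    intro Z
    rw [Finset.sum_comm]
    exact Finset.sum_congr rfl fun r _ => Finset.sum_congr rfl fun i _ => by ring
  rw [h2 Z1, h2 Z2]
  simp only [h1]
  ring

lemma main3h {s m : ℕ} (t : ℝ) (I : Fin m → ℝ) (β : Fin s → ℝ)
    (X1 X2 Y1 Y2 W1 W2 : Fin m → Fin s → ℝ) (Z1 Z2 : Fin m → Fin m → Fin s → ℝ) :
    ∑ r, I r * ∑ i, β i * ((X1 r i + t * Y1 r i + I r * W1 r i
        + ∑ ρ ∈ Finset.univ.erase r, I ρ * Z1 r ρ i)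
      + (X2 r i + t * Y2 r i + I r * W2 r i
        + ∑ ρ ∈ Finset.univ.erase r, I ρ * Z2 r ρ i))
    = ∑ r, I r * ∑ i, β i * X1 r i + ∑ r, I r * ∑ i, β i * X2 r i
      + ∑ r, t * I r * (∑ i, β i * Y1 r i) + ∑ r, t * I r * (∑ i, β i * Y2 r i)
      + ∑ r, I r * I r * ((∑ i, β i * W1 r i) + (∑ i, β i * W2 r i))
      + ∑ r, ∑ ρ ∈ Finset.univ.erase r, (I r * I ρ) * (∑ i, β i * Z1 r ρ i)
      + ∑ r, ∑ ρ ∈ Finset.univ.erase r, (I r * I ρ) * (∑ i, β i * Z2 r ρ i) := by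
  have key : ∀ r, I r * ∑ i, β i * ((X1 r i + t * Y1 r i + I r * W1 r i
        + ∑ ρ ∈ Finset.univ.erase r, I ρ * Z1 r ρ i)
      + (X2 r i + t * Y2 r i + I r * W2 r i
        + ∑ ρ ∈ Finset.univ.erase r, I ρ * Z2 r ρ i))
      = I r * ∑ i, β i * X1 r i + I r * ∑ i, β i * X2 r i
        + t * I r * (∑ i, β i * Y1 r i) + t * I r * (∑ i, β i * Y2 r i)
        + I r * I r * ((∑ i, β i * W1 r i) + (∑ i, β i * W2 r i))
        + ∑ ρ ∈ Finset.univ.erase r, (I r * I ρ) * (∑ i, β i * Z1 r ρ i)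
        + ∑ ρ ∈ Finset.univ.erase r, (I r * I ρ) * (∑ i, β i * Z2 r ρ i) := by
    intro r
    have h2 : ∀ (Z : Fin m → Fin m → Fin s → ℝ),
        ∑ i : Fin s, I r * (β i * ∑ ρ ∈ Finset.univ.erase r, I ρ * Z r ρ i)
          = ∑ ρ ∈ Finset.univ.erase r, (I r * I ρ) * (∑ i, β i * Z r ρ i) := by
      intro Z
      simp only [Finset.mul_sum]
      rw [Finset.sum_comm]
      exact Finset.sum_congr rfl fun ρ _ => Finset.sum_congr rfl fun i _ => by ring
    simp only [mul_add, Finset.mul_sum, Finset.sum_add_distrib]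
    rw [show (∑ x : Fin s, ∑ i ∈ Finset.univ.erase r, I r * (β x * (I i * Z1 r i x)))
        = ∑ i : Fin s, I r * (β i * ∑ ρ ∈ Finset.univ.erase r, I ρ * Z1 r ρ i) by
      simp only [Finset.mul_sum],
      show (∑ x : Fin s, ∑ i ∈ Finset.univ.erase r, I r * (β x * (I i * Z2 r i x)))
        = ∑ i : Fin s, I r * (β i * ∑ ρ ∈ Finset.univ.erase r, I ρ * Z2 r ρ i) by
      simp only [Finset.mul_sum],
      h2 Z1, h2 Z2]
    have h1 : ∀ (Y : Fin m → Fin s → ℝ) i, I r * (β i * (t * Y r i)) = t * (I r * (β i * Y r i)) :=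
      fun Y i => by ring
    have h3 : ∀ (W : Fin m → Fin s → ℝ) i, I r * (β i * (I r * W r i)) = I r * (I r * (β i * W r i)) :=
      fun W i => by ring
    simp only [h1, h3, ← Finset.mul_sum]
    ring
  calc ∑ r, I r * ∑ i, β i * ((X1 r i + t * Y1 r i + I r * W1 r i
        + ∑ ρ ∈ Finset.univ.erase r, I ρ * Z1 r ρ i)
      + (X2 r i + t * Y2 r i + I r * W2 r i
        + ∑ ρ ∈ Finset.univ.erase r, I ρ * Z2 r ρ i))
      = ∑ r, (I r * ∑ i, β i * X1 r i + I r * ∑ i, β i * X2 r i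
        + t * I r * (∑ i, β i * Y1 r i) + t * I r * (∑ i, β i * Y2 r i)
        + I r * I r * ((∑ i, β i * W1 r i) + (∑ i, β i * W2 r i))
        + ∑ ρ ∈ Finset.univ.erase r, (I r * I ρ) * (∑ i, β i * Z1 r ρ i)
        + ∑ ρ ∈ Finset.univ.erase r, (I r * I ρ) * (∑ i, β i * Z2 r ρ i)) :=
        Finset.sum_congr rfl fun r _ => key r
    _ = _ := by simp only [Finset.sum_add_distrib]

lemma keyKv {s : ℕ} (γ δ : Fin s → ℝ) (c c' : Fin s → Fin s → ℝ)
    (hcc : ∀ i j, γ i * c i j + δ j * c' j i = γ i * δ j)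
    (u w : Fin s → E N) :
    (∑ i, γ i * ⟪∑ j, c i j • w j, u i⟫) + (∑ i, δ i * ⟪w i, ∑ j, c' i j • u j⟫)
      = ⟪∑ j, δ j • w j, ∑ i, γ i • u i⟫ := by
  have h1 : (∑ i, γ i * ⟪∑ j, c i j • w j, u i⟫)
      = ∑ i, ∑ j, γ i * c i j * ⟪u i, w j⟫ := by
    refine Finset.sum_congr rfl fun i _ => ?_
    rw [sum_inner, Finset.mul_sum]
    exact Finset.sum_congr rfl fun j _ => by
      rw [real_inner_smul_left, real_inner_comm]; ring
  have h2 : (∑ i, δ i * ⟪w i, ∑ j, c' i j • u j⟫)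
      = ∑ i, ∑ j, δ j * c' j i * ⟪u i, w j⟫ := by
    rw [Finset.sum_comm]
    refine Finset.sum_congr rfl fun j _ => ?_
    rw [inner_sum, Finset.mul_sum]
    exact Finset.sum_congr rfl fun i _ => by
      rw [real_inner_smul_right, real_inner_comm]; ring
  have h3 : (⟪∑ j, δ j • w j, ∑ i, γ i • u i⟫ : ℝ)
      = ∑ i, ∑ j, γ i * δ j * ⟪u i, w j⟫ := by
    rw [sum_inner, Finset.sum_comm]
    refine Finset.sum_congr rfl fun i _ => ?_
    rw [inner_sum]
    refine Finset.sum_congr rfl fun j _ => ?_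
    rw [real_inner_smul_left, real_inner_smul_right, real_inner_comm]; ring
  rw [h1, h2, h3, ← Finset.sum_add_distrib]
  refine Finset.sum_congr rfl fun i _ => ?_
  rw [← Finset.sum_add_distrib]
  refine Finset.sum_congr rfl fun j _ => ?_
  rw [← add_mul, hcc i j]

lemma erase_swap {m : ℕ} (S : Fin m → Fin m → ℝ) :
    ∑ r, ∑ ρ ∈ Finset.univ.erase r, S r ρ = ∑ r, ∑ ρ ∈ Finset.univ.erase r, S ρ r := by
  have h : ∀ r : Fin m, Finset.univ.erase r = Finset.univ.filter (fun ρ => ρ ≠ r) := by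
    intro r; rw [Finset.filter_ne']
  simp only [h, Finset.sum_filter]
  rw [Finset.sum_comm]
  exact Finset.sum_congr rfl fun x _ => Finset.sum_congr rfl fun y _ => by simp only [ne_comm]

lemma diag_split {m : ℕ} (T : Fin m → Fin m → ℝ) :
    ∑ r, ∑ ρ, T r ρ = ∑ r, T r r + ∑ r, ∑ ρ ∈ Finset.univ.erase r, T ρ r := by
  rw [Finset.sum_comm, ← Finset.sum_add_distrib]
  exact Finset.sum_congr rfl fun ρ _ => (Finset.add_sum_erase _ _ (Finset.mem_univ ρ)).symm

lemma main_algebra {s m : ℕ} (Δt : ℝ) (Ihat : Fin m → ℝ)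
    (a0 a1 b0 b1 b3 : Fin s → Fin s → ℝ) (α β : Fin s → ℝ)
    (hc1 : ∀ i j, α i * a0 i j + α j * a0 j i = α i * α j)
    (hc2 : ∀ i j, α i * b0 i j + β j * a1 j i = α i * β j)
    (hc3 : ∀ i j, β i * b1 i j + β j * b1 j i = β i * β j)
    (hc4 : ∀ i j, β i * b3 i j + β j * b3 j i = β i * β j)
    (pm v1 : E N) (Gv dΦ : Fin s → E N) (gv dΨ : Fin m → Fin s → E N)
    (Xp dQ : Fin s → E N) (Yp dQr : Fin m → Fin s → E N) (yy dqp : E N)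
    (hXp : ∀ i, Xp i = pm + Δt • ∑ j, a0 i j • Gv j + ∑ r, Ihat r • ∑ j, b0 i j • gv r j)
    (hYp : ∀ l i, Yp l i = pm + Δt • ∑ j, a1 i j • Gv j + Ihat l • ∑ j, b1 i j • gv l j
        + ∑ r ∈ Finset.univ.erase l, Ihat r • ∑ j, b3 i j • gv r j)
    (hyy : yy = pm + Δt • ∑ i, α i • Gv i + ∑ r, Ihat r • ∑ i, β i • gv r i)
    (hdQ : ∀ i, dQ i = v1 + Δt • ∑ j, a0 i j • dΦ j + ∑ r, Ihat r • ∑ j, b0 i j • dΨ r j)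
    (hdQr : ∀ l i, dQr l i = v1 + Δt • ∑ j, a1 i j • dΦ j + Ihat l • ∑ j, b1 i j • dΨ l j
        + ∑ r ∈ Finset.univ.erase l, Ihat r • ∑ j, b3 i j • dΨ r j)
    (hdqp : dqp = v1 + Δt • ∑ i, α i • dΦ i + ∑ r, Ihat r • ∑ i, β i • dΨ r i) :
    ⟪yy, dqp⟫ - Δt * ∑ i, α i * (⟪Xp i, dΦ i⟫ + ⟪Gv i, dQ i⟫)
      - ∑ r, Ihat r * ∑ i, β i * (⟪Yp r i, dΨ r i⟫ + ⟪gv r i, dQr r i⟫) = ⟪pm, v1⟫ := by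
  -- expansion of ⟪yy, dqp⟫
  have e0 : ⟪yy, dqp⟫ = ⟪pm, v1⟫ + Δt * ⟪pm, ∑ i, α i • dΦ i⟫
      + ∑ r, Ihat r * ⟪pm, ∑ i, β i • dΨ r i⟫
      + Δt * ⟪∑ i, α i • Gv i, v1⟫ + ∑ r, Ihat r * ⟪∑ i, β i • gv r i, v1⟫
      + Δt * Δt * ⟪∑ i, α i • Gv i, ∑ i, α i • dΦ i⟫
      + ∑ r, (Δt * Ihat r) * ⟪∑ i, α i • Gv i, ∑ i, β i • dΨ r i⟫
      + ∑ r, (Δt * Ihat r) * ⟪∑ i, β i • gv r i, ∑ i, α i • dΦ i⟫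
      + ∑ r, ∑ ρ, (Ihat r * Ihat ρ) * ⟪∑ i, β i • gv r i, ∑ i, β i • dΨ ρ i⟫ := by
    rw [hyy, hdqp]
    exact e0h pm v1 _ _ _ _ Δt Ihat
  -- pointwise expansions
  have eX : ∀ i, ⟪Xp i, dΦ i⟫ = ⟪pm, dΦ i⟫ + Δt * ⟪∑ j, a0 i j • Gv j, dΦ i⟫
      + ∑ r, Ihat r * ⟪∑ j, b0 i j • gv r j, dΦ i⟫ := fun i => by
    rw [hXp i]; exact exp3L _ _ _ _ _ _
  have eQ : ∀ i, ⟪Gv i, dQ i⟫ = ⟪Gv i, v1⟫ + Δt * ⟪Gv i, ∑ j, a0 i j • dΦ j⟫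
      + ∑ r, Ihat r * ⟪Gv i, ∑ j, b0 i j • dΨ r j⟫ := fun i => by
    rw [hdQ i]; exact exp3R _ _ _ _ _ _
  have eY : ∀ r i, ⟪Yp r i, dΨ r i⟫ = ⟪pm, dΨ r i⟫ + Δt * ⟪∑ j, a1 i j • Gv j, dΨ r i⟫
      + Ihat r * ⟪∑ j, b1 i j • gv r j, dΨ r i⟫
      + ∑ ρ ∈ Finset.univ.erase r, Ihat ρ * ⟪∑ j, b3 i j • gv ρ j, dΨ r i⟫ := fun r i => by
    rw [hYp r i]; exact exp4L _ _ _ _ _ _ _ _ _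
  have eQr : ∀ r i, ⟪gv r i, dQr r i⟫ = ⟪gv r i, v1⟫ + Δt * ⟪gv r i, ∑ j, a1 i j • dΦ j⟫
      + Ihat r * ⟪gv r i, ∑ j, b1 i j • dΨ r j⟫
      + ∑ ρ ∈ Finset.univ.erase r, Ihat ρ * ⟪gv r i, ∑ j, b3 i j • dΨ ρ j⟫ := fun r i => by
    rw [hdQr r i]; exact exp4R _ _ _ _ _ _ _ _ _
  -- the two big distributed sums
  have main2 : Δt * ∑ i, α i * (⟪Xp i, dΦ i⟫ + ⟪Gv i, dQ i⟫)
      = Δt * ∑ i, α i * ⟪pm, dΦ i⟫ + Δt * ∑ i, α i * ⟪Gv i, v1⟫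
        + Δt * Δt * ((∑ i, α i * ⟪∑ j, a0 i j • Gv j, dΦ i⟫)
            + (∑ i, α i * ⟪Gv i, ∑ j, a0 i j • dΦ j⟫))
        + ∑ r, Δt * Ihat r * (∑ i, α i * ⟪∑ j, b0 i j • gv r j, dΦ i⟫)
        + ∑ r, Δt * Ihat r * (∑ i, α i * ⟪Gv i, ∑ j, b0 i j • dΨ r j⟫) := by
    calc Δt * ∑ i, α i * (⟪Xp i, dΦ i⟫ + ⟪Gv i, dQ i⟫)
        = Δt * ∑ i, α i * ((⟪pm, dΦ i⟫ + Δt * ⟪∑ j, a0 i j • Gv j, dΦ i⟫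
            + ∑ r, Ihat r * ⟪∑ j, b0 i j • gv r j, dΦ i⟫)
          + (⟪Gv i, v1⟫ + Δt * ⟪Gv i, ∑ j, a0 i j • dΦ j⟫
            + ∑ r, Ihat r * ⟪Gv i, ∑ j, b0 i j • dΨ r j⟫)) := by
          congr 1
          exact Finset.sum_congr rfl fun i _ => by rw [eX i, eQ i]
      _ = _ := main2h Δt Ihat α _ _ _ _ _ _
  have main3 : ∑ r, Ihat r * ∑ i, β i * (⟪Yp r i, dΨ r i⟫ + ⟪gv r i, dQr r i⟫)
      = ∑ r, Ihat r * ∑ i, β i * ⟪pm, dΨ r i⟫ + ∑ r, Ihat r * ∑ i, β i * ⟪gv r i, v1⟫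
        + ∑ r, Δt * Ihat r * (∑ i, β i * ⟪∑ j, a1 i j • Gv j, dΨ r i⟫)
        + ∑ r, Δt * Ihat r * (∑ i, β i * ⟪gv r i, ∑ j, a1 i j • dΦ j⟫)
        + ∑ r, Ihat r * Ihat r * ((∑ i, β i * ⟪∑ j, b1 i j • gv r j, dΨ r i⟫)
            + (∑ i, β i * ⟪gv r i, ∑ j, b1 i j • dΨ r j⟫))
        + ∑ r, ∑ ρ ∈ Finset.univ.erase r, (Ihat r * Ihat ρ)
            * (∑ i, β i * ⟪∑ j, b3 i j • gv ρ j, dΨ r i⟫)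
        + ∑ r, ∑ ρ ∈ Finset.univ.erase r, (Ihat r * Ihat ρ)
            * (∑ i, β i * ⟪gv r i, ∑ j, b3 i j • dΨ ρ j⟫) := by
    calc ∑ r, Ihat r * ∑ i, β i * (⟪Yp r i, dΨ r i⟫ + ⟪gv r i, dQr r i⟫)
        = ∑ r, Ihat r * ∑ i, β i * ((⟪pm, dΨ r i⟫ + Δt * ⟪∑ j, a1 i j • Gv j, dΨ r i⟫
            + Ihat r * ⟪∑ j, b1 i j • gv r j, dΨ r i⟫
            + ∑ ρ ∈ Finset.univ.erase r, Ihat ρ * ⟪∑ j, b3 i j • gv ρ j, dΨ r i⟫)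
          + (⟪gv r i, v1⟫ + Δt * ⟪gv r i, ∑ j, a1 i j • dΦ j⟫
            + Ihat r * ⟪gv r i, ∑ j, b1 i j • dΨ r j⟫
            + ∑ ρ ∈ Finset.univ.erase r, Ihat ρ * ⟪gv r i, ∑ j, b3 i j • dΨ ρ j⟫)) := by
          exact Finset.sum_congr rfl fun r _ => by
            congr 1
            exact Finset.sum_congr rfl fun i _ => by rw [eY r i, eQr r i]
      _ = _ := main3h Δt Ihat β _ _ _ _ _ _ _ _
  -- links between atoms
  have c1 : ∑ i, α i * ⟪pm, dΦ i⟫ = ⟪pm, ∑ i, α i • dΦ i⟫ := by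
    rw [inner_sum]
    exact Finset.sum_congr rfl fun i _ => by rw [real_inner_smul_right]
  have c2 : ∑ r, Ihat r * ∑ i, β i * ⟪pm, dΨ r i⟫ = ∑ r, Ihat r * ⟪pm, ∑ i, β i • dΨ r i⟫ := by
    refine Finset.sum_congr rfl fun r _ => ?_
    rw [inner_sum]
    congr 1
    exact Finset.sum_congr rfl fun i _ => by rw [real_inner_smul_right]
  have c3 : ∑ i, α i * ⟪Gv i, v1⟫ = ⟪∑ i, α i • Gv i, v1⟫ := by
    rw [sum_inner]
    exact Finset.sum_congr rfl fun i _ => by rw [real_inner_smul_left]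
  have c4 : ∑ r, Ihat r * ∑ i, β i * ⟪gv r i, v1⟫ = ∑ r, Ihat r * ⟪∑ i, β i • gv r i, v1⟫ := by
    refine Finset.sum_congr rfl fun r _ => ?_
    rw [sum_inner]
    congr 1
    exact Finset.sum_congr rfl fun i _ => by rw [real_inner_smul_left]
  -- the symplecticity pairings
  have K1 : (∑ i, α i * ⟪∑ j, a0 i j • Gv j, dΦ i⟫)
      + (∑ i, α i * ⟪Gv i, ∑ j, a0 i j • dΦ j⟫)
      = ⟪∑ i, α i • Gv i, ∑ i, α i • dΦ i⟫ := keyKv α α a0 a0 hc1 dΦ Gv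
  have K2s : ∑ r, Δt * Ihat r * (∑ i, α i * ⟪∑ j, b0 i j • gv r j, dΦ i⟫)
      + ∑ r, Δt * Ihat r * (∑ i, β i * ⟪gv r i, ∑ j, a1 i j • dΦ j⟫)
      = ∑ r, (Δt * Ihat r) * ⟪∑ i, β i • gv r i, ∑ i, α i • dΦ i⟫ := by
    rw [← Finset.sum_add_distrib]
    exact Finset.sum_congr rfl fun r _ => by rw [← mul_add, keyKv α β b0 a1 hc2 dΦ (gv r)]
  have K3s : ∑ r, Δt * Ihat r * (∑ i, β i * ⟪∑ j, a1 i j • Gv j, dΨ r i⟫)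
      + ∑ r, Δt * Ihat r * (∑ i, α i * ⟪Gv i, ∑ j, b0 i j • dΨ r j⟫)
      = ∑ r, (Δt * Ihat r) * ⟪∑ i, α i • Gv i, ∑ i, β i • dΨ r i⟫ := by
    rw [← Finset.sum_add_distrib]
    refine Finset.sum_congr rfl fun r _ => ?_
    rw [← mul_add, keyKv β α a1 b0 (fun i j => by have := hc2 j i; linarith) (dΨ r) Gv]
  have K4s : ∑ r, Ihat r * Ihat r * ((∑ i, β i * ⟪∑ j, b1 i j • gv r j, dΨ r i⟫)
        + (∑ i, β i * ⟪gv r i, ∑ j, b1 i j • dΨ r j⟫))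
      = ∑ r, (Ihat r * Ihat r) * ⟪∑ i, β i • gv r i, ∑ i, β i • dΨ r i⟫ := by
    exact Finset.sum_congr rfl fun r _ => by rw [keyKv β β b1 b1 hc3 (dΨ r) (gv r)]
  have K5s : ∑ r, ∑ ρ ∈ Finset.univ.erase r, (Ihat r * Ihat ρ)
        * (∑ i, β i * ⟪∑ j, b3 i j • gv ρ j, dΨ r i⟫)
      + ∑ r, ∑ ρ ∈ Finset.univ.erase r, (Ihat r * Ihat ρ)
        * (∑ i, β i * ⟪gv r i, ∑ j, b3 i j • dΨ ρ j⟫)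
      = ∑ r, ∑ ρ ∈ Finset.univ.erase r, (Ihat ρ * Ihat r)
        * ⟪∑ i, β i • gv ρ i, ∑ i, β i • dΨ r i⟫ := by
    rw [erase_swap (fun r ρ => (Ihat r * Ihat ρ) * (∑ i, β i * ⟪gv r i, ∑ j, b3 i j • dΨ ρ j⟫))]
    rw [← Finset.sum_add_distrib]
    refine Finset.sum_congr rfl fun r _ => ?_
    rw [← Finset.sum_add_distrib]
    refine Finset.sum_congr rfl fun ρ _ => ?_
    rw [show Ihat r * Ihat ρ = Ihat ρ * Ihat r from mul_comm _ _, ← mul_add,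
      keyKv β β b3 b3 hc4 (dΨ r) (gv ρ)]
  have diag : ∑ r, ∑ ρ, (Ihat r * Ihat ρ) * ⟪∑ i, β i • gv r i, ∑ i, β i • dΨ ρ i⟫
      = ∑ r, (Ihat r * Ihat r) * ⟪∑ i, β i • gv r i, ∑ i, β i • dΨ r i⟫
        + ∑ r, ∑ ρ ∈ Finset.univ.erase r, (Ihat ρ * Ihat r)
            * ⟪∑ i, β i • gv ρ i, ∑ i, β i • dΨ r i⟫ :=
    diag_split (fun r ρ => (Ihat r * Ihat ρ) * ⟪∑ i, β i • gv r i, ∑ i, β i • dΨ ρ i⟫)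
  linear_combination e0 - main2 - main3 - Δt * c1 - c2 - Δt * c3 - c4 - Δt * Δt * K1
    - K2s - K3s - K4s - K5s + diag

end Alg
section Thm
open RealInnerProductSpace

set_option maxHeartbeats 4000000 in
theorem weak_LdA_RK_is_variational_integrator
    {N m s : ℕ} (hN : 1 ≤ N) (hm : 1 ≤ m) (hs : 1 ≤ s)
    (Δt : ℝ) (Ihat : Fin m → ℝ)
    (H : E N × E N → ℝ) (h : Fin m → E N × E N → ℝ)
    (hH : ContDiff ℝ 2 H) (hh : ∀ r, ContDiff ℝ 2 (h r))
    (F : E N × E N → E N) (f : Fin m → E N × E N → E N)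
    (hF : ContDiff ℝ 1 F) (hf : ∀ r, ContDiff ℝ 1 (f r))
    (a0 a1 b0 b1 b3 : Fin s → Fin s → ℝ) (α β : Fin s → ℝ)
    (hc1 : ∀ i j, α i * a0 i j + α j * a0 j i = α i * α j)
    (hc2 : ∀ i j, α i * b0 i j + β j * a1 j i = α i * β j)
    (hc3 : ∀ i j, β i * b1 i j + β j * b1 j i = β i * β j)
    (hc4 : ∀ i j, β i * b3 i j + β j * b3 j i = β i * β j)
    (U : Set (E N × E N)) (hU : IsOpen U)
    (Q0 P0 : Fin s → E N × E N → E N)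
    (Qr Pr : Fin m → Fin s → E N × E N → E N)
    (qplus pminus : E N × E N → E N)
    (hQ0diff : ∀ i, ∀ z ∈ U, DifferentiableAt ℝ (Q0 i) z)
    (hP0diff : ∀ i, ∀ z ∈ U, DifferentiableAt ℝ (P0 i) z)
    (hQrdiff : ∀ l i, ∀ z ∈ U, DifferentiableAt ℝ (Qr l i) z)
    (hPrdiff : ∀ l i, ∀ z ∈ U, DifferentiableAt ℝ (Pr l i) z)
    (hqdiff : ∀ z ∈ U, DifferentiableAt ℝ qplus z)
    (hpdiff : ∀ z ∈ U, DifferentiableAt ℝ pminus z)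
    -- the weak Runge–Kutta relations, with q_k = z.1, p_{k+1} = z.2,
    -- p_k = pminus z, q_{k+1} = qplus z:
    (hQ0 : ∀ z ∈ U, ∀ i, Q0 i z = z.1
        + Δt • ∑ j, a0 i j • D2 H (Q0 j z) (P0 j z)
        + ∑ r, Ihat r • ∑ j, b0 i j • D2 (h r) (Qr r j z) (Pr r j z))
    (hP0 : ∀ z ∈ U, ∀ i, P0 i z = pminus z
        + Δt • ∑ j, a0 i j • (-D1 H (Q0 j z) (P0 j z) + F (Q0 j z, P0 j z))
        + ∑ r, Ihat r • ∑ j, b0 i j •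
            (-D1 (h r) (Qr r j z) (Pr r j z) + f r (Qr r j z, Pr r j z)))
    (hQl : ∀ z ∈ U, ∀ l i, Qr l i z = z.1
        + Δt • ∑ j, a1 i j • D2 H (Q0 j z) (P0 j z)
        + Ihat l • ∑ j, b1 i j • D2 (h l) (Qr l j z) (Pr l j z)
        + ∑ r ∈ Finset.univ.erase l, Ihat r • ∑ j, b3 i j • D2 (h r) (Qr r j z) (Pr r j z))
    (hPl : ∀ z ∈ U, ∀ l i, Pr l i z = pminus z
        + Δt • ∑ j, a1 i j • (-D1 H (Q0 j z) (P0 j z) + F (Q0 j z, P0 j z))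
        + Ihat l • ∑ j, b1 i j •
            (-D1 (h l) (Qr l j z) (Pr l j z) + f l (Qr l j z, Pr l j z))
        + ∑ r ∈ Finset.univ.erase l, Ihat r • ∑ j, b3 i j •
            (-D1 (h r) (Qr r j z) (Pr r j z) + f r (Qr r j z, Pr r j z)))
    (hqp : ∀ z ∈ U, qplus z = z.1
        + Δt • ∑ i, α i • D2 H (Q0 i z) (P0 i z)
        + ∑ r, Ihat r • ∑ i, β i • D2 (h r) (Qr r i z) (Pr r i z))
    (hpp : ∀ z ∈ U, z.2 = pminus z
        + Δt • ∑ i, α i • (-D1 H (Q0 i z) (P0 i z) + F (Q0 i z, P0 i z))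
        + ∑ r, Ihat r • ∑ i, β i •
            (-D1 (h r) (Qr r i z) (Pr r i z) + f r (Qr r i z, Pr r i z)))
    -- the discrete Hamiltonian:
    (Hd : E N × E N → ℝ)
    (hHd : ∀ z : E N × E N, Hd z = (inner ℝ z.2 (qplus z) : ℝ)
        - Δt * ∑ i, α i *
            ((inner ℝ (P0 i z) (D2 H (Q0 i z) (P0 i z)) : ℝ) - H (Q0 i z, P0 i z))
        - ∑ r, Ihat r * ∑ i, β i *
            ((inner ℝ (Pr r i z) (D2 (h r) (Qr r i z) (Pr r i z)) : ℝ)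
              - h r (Qr r i z, Pr r i z)))
    -- the discrete forces:
    (Fminus Fplus : E N × E N → E N)
    (hFm : ∀ z : E N × E N, Fminus z =
        Δt • ∑ i, α i •
          (ContinuousLinearMap.adjoint (fderiv ℝ (fun x' => Q0 i (x', z.2)) z.1))
            (F (Q0 i z, P0 i z))
        + ∑ r, Ihat r • ∑ i, β i •
          (ContinuousLinearMap.adjoint (fderiv ℝ (fun x' => Qr r i (x', z.2)) z.1))
            (f r (Qr r i z, Pr r i z)))
    (hFp : ∀ z : E N × E N, Fplus z =
        Δt • ∑ i, α i •
          (ContinuousLinearMap.adjoint (fderiv ℝ (fun y' => Q0 i (z.1, y')) z.2))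
            (F (Q0 i z, P0 i z))
        + ∑ r, Ihat r • ∑ i, β i •
          (ContinuousLinearMap.adjoint (fderiv ℝ (fun y' => Qr r i (z.1, y')) z.2))
            (f r (Qr r i z, Pr r i z))) :
    ∀ z ∈ U, D2 Hd z.1 z.2 = qplus z + Fplus z ∧ D1 Hd z.1 z.2 = pminus z + Fminus z := by
  intro z hz
  -- basic differentiability facts
  have hHdiff : Differentiable ℝ H := hH.differentiable two_ne_zero
  have hhdiff : ∀ r, Differentiable ℝ (h r) := fun r => (hh r).differentiable two_ne_zero
  have hQ0d : ∀ i, DifferentiableAt ℝ (Q0 i) z := fun i => hQ0diff i z hz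
  have hP0d : ∀ i, DifferentiableAt ℝ (P0 i) z := fun i => hP0diff i z hz
  have hQrd : ∀ r i, DifferentiableAt ℝ (Qr r i) z := fun r i => hQrdiff r i z hz
  have hPrd : ∀ r i, DifferentiableAt ℝ (Pr r i) z := fun r i => hPrdiff r i z hz
  have hqd : DifferentiableAt ℝ qplus z := hqdiff z hz
  have hΦd : ∀ i, DifferentiableAt ℝ (fun w => D2 H (Q0 i w) (P0 i w)) z := fun i =>
    ((diff_D2 H hH) (Q0 i z, P0 i z)).comp (g := fun w : E N × E N => D2 H w.1 w.2) z ((hQ0d i).prodMk (hP0d i))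
  have hΨd : ∀ r i, DifferentiableAt ℝ (fun w => D2 (h r) (Qr r i w) (Pr r i w)) z :=
    fun r i => ((diff_D2 (h r) (hh r)) (Qr r i z, Pr r i z)).comp (g := fun w : E N × E N => D2 (h r) w.1 w.2) z ((hQrd r i).prodMk (hPrd r i))
  -- differentiability of the summands of Hd
  have dT1 : DifferentiableAt ℝ (fun w : E N × E N => (inner ℝ w.2 (qplus w) : ℝ)) z :=
    (differentiableAt_snd).inner ℝ hqd
  have dbi : ∀ i, DifferentiableAt ℝ (fun w =>
      (inner ℝ (P0 i w) (D2 H (Q0 i w) (P0 i w)) : ℝ) - H (Q0 i w, P0 i w)) z := fun i =>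
    ((hP0d i).inner ℝ (hΦd i)).sub
      ((hHdiff (Q0 i z, P0 i z)).comp z ((hQ0d i).prodMk (hP0d i)))
  have dcri : ∀ r i, DifferentiableAt ℝ (fun w =>
      (inner ℝ (Pr r i w) (D2 (h r) (Qr r i w) (Pr r i w)) : ℝ) - h r (Qr r i w, Pr r i w)) z :=
    fun r i => ((hPrd r i).inner ℝ (hΨd r i)).sub
      ((hhdiff r (Qr r i z, Pr r i z)).comp z ((hQrd r i).prodMk (hPrd r i)))
  have dHcomp : ∀ i, DifferentiableAt ℝ (fun w => H (Q0 i w, P0 i w)) z := fun i =>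
    (hHdiff (Q0 i z, P0 i z)).comp z ((hQ0d i).prodMk (hP0d i))
  have dhcomp : ∀ r i, DifferentiableAt ℝ (fun w => h r (Qr r i w, Pr r i w)) z := fun r i =>
    (hhdiff r (Qr r i z, Pr r i z)).comp z ((hQrd r i).prodMk (hPrd r i))
  have dT2 : DifferentiableAt ℝ (fun w => ∑ i, α i *
      ((inner ℝ (P0 i w) (D2 H (Q0 i w) (P0 i w)) : ℝ) - H (Q0 i w, P0 i w))) z :=
    DifferentiableAt.fun_sum fun i _ => (dbi i).const_mul (α i)
  have dT2' : DifferentiableAt ℝ (fun w => Δt * ∑ i, α i *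
      ((inner ℝ (P0 i w) (D2 H (Q0 i w) (P0 i w)) : ℝ) - H (Q0 i w, P0 i w))) z :=
    dT2.const_mul Δt
  have dT3r : ∀ r, DifferentiableAt ℝ (fun w => ∑ i, β i *
      ((inner ℝ (Pr r i w) (D2 (h r) (Qr r i w) (Pr r i w)) : ℝ) - h r (Qr r i w, Pr r i w))) z :=
    fun r => DifferentiableAt.fun_sum fun i _ => (dcri r i).const_mul (β i)
  have dT3 : DifferentiableAt ℝ (fun w => ∑ r, Ihat r * ∑ i, β i *
      ((inner ℝ (Pr r i w) (D2 (h r) (Qr r i w) (Pr r i w)) : ℝ) - h r (Qr r i w, Pr r i w))) z :=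
    DifferentiableAt.fun_sum fun r _ => (dT3r r).const_mul (Ihat r)
  have hHdf : Hd = fun w => (inner ℝ w.2 (qplus w) : ℝ)
      - Δt * ∑ i, α i *
          ((inner ℝ (P0 i w) (D2 H (Q0 i w) (P0 i w)) : ℝ) - H (Q0 i w, P0 i w))
      - ∑ r, Ihat r * ∑ i, β i *
          ((inner ℝ (Pr r i w) (D2 (h r) (Qr r i w) (Pr r i w)) : ℝ)
            - h r (Qr r i w, Pr r i w)) := funext hHd
  have hHdd : DifferentiableAt ℝ Hd z := by
    rw [hHdf]; exact (dT1.sub dT2').sub dT3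
  -- the master directional-derivative identity
  have master : ∀ v : E N × E N, fderiv ℝ Hd z v
      = ⟪pminus z + Fminus z, v.1⟫ + ⟪qplus z + Fplus z, v.2⟫ := by
    intro v
    -- directional derivatives of the stage maps
    have hdQv : ∀ i, fderiv ℝ (Q0 i) z v = v.1
        + Δt • ∑ j, a0 i j • (fderiv ℝ (fun w => D2 H (Q0 j w) (P0 j w)) z v)
        + ∑ r, Ihat r • ∑ j, b0 i j •
            (fderiv ℝ (fun w => D2 (h r) (Qr r j w) (Pr r j w)) z v) := by
      intro i
      have hfe : Q0 i =ᶠ[nhds z] (fun w => w.1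
          + Δt • ∑ j, a0 i j • D2 H (Q0 j w) (P0 j w)
          + ∑ r, Ihat r • ∑ j, b0 i j • D2 (h r) (Qr r j w) (Pr r j w)) :=
        Filter.eventuallyEq_of_mem (hU.mem_nhds hz) (fun w hw => hQ0 w hw i)
      have hR : HasFDerivAt (fun w : E N × E N => w.1
          + Δt • ∑ j, a0 i j • D2 H (Q0 j w) (P0 j w)
          + ∑ r, Ihat r • ∑ j, b0 i j • D2 (h r) (Qr r j w) (Pr r j w))
          (ContinuousLinearMap.fst ℝ (E N) (E N)
            + Δt • ∑ j, a0 i j • fderiv ℝ (fun w => D2 H (Q0 j w) (P0 j w)) z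
            + ∑ r, Ihat r • ∑ j, b0 i j •
                fderiv ℝ (fun w => D2 (h r) (Qr r j w) (Pr r j w)) z) z :=
        (hasFDerivAt_fst.add ((HasFDerivAt.fun_sum (fun j _ =>
            ((hΦd j).hasFDerivAt.const_smul (a0 i j)))).const_smul Δt)).add
          (HasFDerivAt.fun_sum fun r _ => (HasFDerivAt.fun_sum fun j _ =>
            ((hΨd r j).hasFDerivAt.const_smul (b0 i j))).const_smul (Ihat r))
      rw [(hR.congr_of_eventuallyEq hfe).fderiv]
      simp [ContinuousLinearMap.add_apply, ContinuousLinearMap.smul_apply,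
        ContinuousLinearMap.sum_apply]
    have hdQrv : ∀ l i, fderiv ℝ (Qr l i) z v = v.1
        + Δt • ∑ j, a1 i j • (fderiv ℝ (fun w => D2 H (Q0 j w) (P0 j w)) z v)
        + Ihat l • ∑ j, b1 i j • (fderiv ℝ (fun w => D2 (h l) (Qr l j w) (Pr l j w)) z v)
        + ∑ r ∈ Finset.univ.erase l, Ihat r • ∑ j, b3 i j •
            (fderiv ℝ (fun w => D2 (h r) (Qr r j w) (Pr r j w)) z v) := by
      intro l i
      have hfe : Qr l i =ᶠ[nhds z] (fun w => w.1
          + Δt • ∑ j, a1 i j • D2 H (Q0 j w) (P0 j w)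
          + Ihat l • ∑ j, b1 i j • D2 (h l) (Qr l j w) (Pr l j w)
          + ∑ r ∈ Finset.univ.erase l, Ihat r • ∑ j, b3 i j • D2 (h r) (Qr r j w) (Pr r j w)) :=
        Filter.eventuallyEq_of_mem (hU.mem_nhds hz) (fun w hw => hQl w hw l i)
      have hR : HasFDerivAt (fun w : E N × E N => w.1
          + Δt • ∑ j, a1 i j • D2 H (Q0 j w) (P0 j w)
          + Ihat l • ∑ j, b1 i j • D2 (h l) (Qr l j w) (Pr l j w)
          + ∑ r ∈ Finset.univ.erase l, Ihat r • ∑ j, b3 i j • D2 (h r) (Qr r j w) (Pr r j w))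
          (ContinuousLinearMap.fst ℝ (E N) (E N)
            + Δt • ∑ j, a1 i j • fderiv ℝ (fun w => D2 H (Q0 j w) (P0 j w)) z
            + Ihat l • ∑ j, b1 i j • fderiv ℝ (fun w => D2 (h l) (Qr l j w) (Pr l j w)) z
            + ∑ r ∈ Finset.univ.erase l, Ihat r • ∑ j, b3 i j •
                fderiv ℝ (fun w => D2 (h r) (Qr r j w) (Pr r j w)) z) z :=
        ((hasFDerivAt_fst.add ((HasFDerivAt.fun_sum (fun j _ =>
            ((hΦd j).hasFDerivAt.const_smul (a1 i j)))).const_smul Δt)).add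
          ((HasFDerivAt.fun_sum (fun j _ =>
            ((hΨd l j).hasFDerivAt.const_smul (b1 i j)))).const_smul (Ihat l))).add
          (HasFDerivAt.fun_sum fun r _ => (HasFDerivAt.fun_sum fun j _ =>
            ((hΨd r j).hasFDerivAt.const_smul (b3 i j))).const_smul (Ihat r))
      rw [(hR.congr_of_eventuallyEq hfe).fderiv]
      simp [ContinuousLinearMap.add_apply, ContinuousLinearMap.smul_apply,
        ContinuousLinearMap.sum_apply]
    have hdqpv : fderiv ℝ qplus z v = v.1
        + Δt • ∑ i, α i • (fderiv ℝ (fun w => D2 H (Q0 i w) (P0 i w)) z v)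
        + ∑ r, Ihat r • ∑ i, β i •
            (fderiv ℝ (fun w => D2 (h r) (Qr r i w) (Pr r i w)) z v) := by
      have hfe : qplus =ᶠ[nhds z] (fun w => w.1
          + Δt • ∑ i, α i • D2 H (Q0 i w) (P0 i w)
          + ∑ r, Ihat r • ∑ i, β i • D2 (h r) (Qr r i w) (Pr r i w)) :=
        Filter.eventuallyEq_of_mem (hU.mem_nhds hz) (fun w hw => hqp w hw)
      have hR : HasFDerivAt (fun w : E N × E N => w.1
          + Δt • ∑ i, α i • D2 H (Q0 i w) (P0 i w)
          + ∑ r, Ihat r • ∑ i, β i • D2 (h r) (Qr r i w) (Pr r i w))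
          (ContinuousLinearMap.fst ℝ (E N) (E N)
            + Δt • ∑ i, α i • fderiv ℝ (fun w => D2 H (Q0 i w) (P0 i w)) z
            + ∑ r, Ihat r • ∑ i, β i •
                fderiv ℝ (fun w => D2 (h r) (Qr r i w) (Pr r i w)) z) z :=
        (hasFDerivAt_fst.add ((HasFDerivAt.fun_sum (fun i _ =>
            ((hΦd i).hasFDerivAt.const_smul (α i)))).const_smul Δt)).add
          (HasFDerivAt.fun_sum fun r _ => (HasFDerivAt.fun_sum fun i _ =>
            ((hΨd r i).hasFDerivAt.const_smul (β i))).const_smul (Ihat r))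
      rw [(hR.congr_of_eventuallyEq hfe).fderiv]
      simp [ContinuousLinearMap.add_apply, ContinuousLinearMap.smul_apply,
        ContinuousLinearMap.sum_apply]
    -- derivative of the first Hd term
    have hT1v : fderiv ℝ (fun w : E N × E N => (inner ℝ w.2 (qplus w) : ℝ)) z v
        = ⟪z.2, fderiv ℝ qplus z v⟫ + ⟪v.2, qplus z⟫ := by
      rw [fderiv_inner_apply (𝕜 := ℝ) differentiableAt_snd hqd v]
      simp [fderiv_snd]
    -- chain rules for the Hamiltonian compositions
    have hch : ∀ i, fderiv ℝ (fun w => H (Q0 i w, P0 i w)) z v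
        = ⟪D1 H (Q0 i z) (P0 i z), fderiv ℝ (Q0 i) z v⟫
          + ⟪D2 H (Q0 i z) (P0 i z), fderiv ℝ (P0 i) z v⟫ := by
      intro i
      have hc : HasFDerivAt (fun w => H (Q0 i w, P0 i w))
          ((fderiv ℝ H (Q0 i z, P0 i z)).comp
            ((fderiv ℝ (Q0 i) z).prod (fderiv ℝ (P0 i) z))) z :=
        (hHdiff (Q0 i z, P0 i z)).hasFDerivAt.comp z
          ((hQ0d i).hasFDerivAt.prodMk (hP0d i).hasFDerivAt)
      rw [hc.fderiv, ContinuousLinearMap.comp_apply, ContinuousLinearMap.prod_apply,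
        fderiv_two H (Q0 i z, P0 i z) (hHdiff _) (fderiv ℝ (Q0 i) z v, fderiv ℝ (P0 i) z v)]
    have hchr : ∀ r i, fderiv ℝ (fun w => h r (Qr r i w, Pr r i w)) z v
        = ⟪D1 (h r) (Qr r i z) (Pr r i z), fderiv ℝ (Qr r i) z v⟫
          + ⟪D2 (h r) (Qr r i z) (Pr r i z), fderiv ℝ (Pr r i) z v⟫ := by
      intro r i
      have hc : HasFDerivAt (fun w => h r (Qr r i w, Pr r i w))
          ((fderiv ℝ (h r) (Qr r i z, Pr r i z)).comp
            ((fderiv ℝ (Qr r i) z).prod (fderiv ℝ (Pr r i) z))) z :=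
        (hhdiff r (Qr r i z, Pr r i z)).hasFDerivAt.comp z
          ((hQrd r i).hasFDerivAt.prodMk (hPrd r i).hasFDerivAt)
      rw [hc.fderiv, ContinuousLinearMap.comp_apply, ContinuousLinearMap.prod_apply,
        fderiv_two (h r) (Qr r i z, Pr r i z) (hhdiff r _)
          (fderiv ℝ (Qr r i) z v, fderiv ℝ (Pr r i) z v)]
    -- per-stage scalar derivatives
    have hbiv : ∀ i, fderiv ℝ (fun w =>
        (inner ℝ (P0 i w) (D2 H (Q0 i w) (P0 i w)) : ℝ) - H (Q0 i w, P0 i w)) z v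
        = ⟪P0 i z, fderiv ℝ (fun w => D2 H (Q0 i w) (P0 i w)) z v⟫
          - ⟪D1 H (Q0 i z) (P0 i z), fderiv ℝ (Q0 i) z v⟫ := by
      intro i
      rw [fderiv_fun_sub ((hP0d i).inner ℝ (hΦd i)) (dHcomp i),
        ContinuousLinearMap.sub_apply,
        fderiv_inner_apply (𝕜 := ℝ) (hP0d i) (hΦd i) v, hch i]
      linear_combination -real_inner_comm (fderiv ℝ (P0 i) z v) (D2 H (Q0 i z) (P0 i z))
    have hcriv : ∀ r i, fderiv ℝ (fun w =>
        (inner ℝ (Pr r i w) (D2 (h r) (Qr r i w) (Pr r i w)) : ℝ) - h r (Qr r i w, Pr r i w)) z v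
        = ⟪Pr r i z, fderiv ℝ (fun w => D2 (h r) (Qr r i w) (Pr r i w)) z v⟫
          - ⟪D1 (h r) (Qr r i z) (Pr r i z), fderiv ℝ (Qr r i) z v⟫ := by
      intro r i
      rw [fderiv_fun_sub ((hPrd r i).inner ℝ (hΨd r i)) (dhcomp r i),
        ContinuousLinearMap.sub_apply,
        fderiv_inner_apply (𝕜 := ℝ) (hPrd r i) (hΨd r i) v, hchr r i]
      linear_combination -real_inner_comm (fderiv ℝ (Pr r i) z v)
        (D2 (h r) (Qr r i z) (Pr r i z))
    have hT2v : fderiv ℝ (fun w => ∑ i, α i *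
        ((inner ℝ (P0 i w) (D2 H (Q0 i w) (P0 i w)) : ℝ) - H (Q0 i w, P0 i w))) z v
        = ∑ i, α i * (⟪P0 i z, fderiv ℝ (fun w => D2 H (Q0 i w) (P0 i w)) z v⟫
            - ⟪D1 H (Q0 i z) (P0 i z), fderiv ℝ (Q0 i) z v⟫) := by
      rw [fderiv_fun_sum (fun i _ => (dbi i).const_mul (α i)), ContinuousLinearMap.sum_apply]
      refine Finset.sum_congr rfl fun i _ => ?_
      rw [fderiv_const_mul (dbi i) (α i), ContinuousLinearMap.smul_apply, smul_eq_mul, hbiv i]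
    have hT3v : fderiv ℝ (fun w => ∑ r, Ihat r * ∑ i, β i *
        ((inner ℝ (Pr r i w) (D2 (h r) (Qr r i w) (Pr r i w)) : ℝ) - h r (Qr r i w, Pr r i w))) z v
        = ∑ r, Ihat r * ∑ i, β i *
            (⟪Pr r i z, fderiv ℝ (fun w => D2 (h r) (Qr r i w) (Pr r i w)) z v⟫
              - ⟪D1 (h r) (Qr r i z) (Pr r i z), fderiv ℝ (Qr r i) z v⟫) := by
      rw [fderiv_fun_sum (fun r _ => (dT3r r).const_mul (Ihat r)), ContinuousLinearMap.sum_apply]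
      refine Finset.sum_congr rfl fun r _ => ?_
      rw [fderiv_const_mul (dT3r r) (Ihat r), ContinuousLinearMap.smul_apply, smul_eq_mul]
      congr 1
      rw [fderiv_fun_sum (fun i _ => (dcri r i).const_mul (β i)), ContinuousLinearMap.sum_apply]
      refine Finset.sum_congr rfl fun i _ => ?_
      rw [fderiv_const_mul (dcri r i) (β i), ContinuousLinearMap.smul_apply, smul_eq_mul,
        hcriv r i]
    -- the full derivative of Hd
    have eHd : fderiv ℝ Hd z v
        = (⟪z.2, fderiv ℝ qplus z v⟫ + ⟪v.2, qplus z⟫)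
          - Δt * ∑ i, α i * (⟪P0 i z, fderiv ℝ (fun w => D2 H (Q0 i w) (P0 i w)) z v⟫
              - ⟪D1 H (Q0 i z) (P0 i z), fderiv ℝ (Q0 i) z v⟫)
          - ∑ r, Ihat r * ∑ i, β i *
              (⟪Pr r i z, fderiv ℝ (fun w => D2 (h r) (Qr r i w) (Pr r i w)) z v⟫
                - ⟪D1 (h r) (Qr r i z) (Pr r i z), fderiv ℝ (Qr r i) z v⟫) := by
      conv_lhs => rw [hHdf]
      rw [fderiv_fun_sub (dT1.fun_sub dT2') dT3, ContinuousLinearMap.sub_apply,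
        fderiv_fun_sub dT1 dT2', ContinuousLinearMap.sub_apply, hT1v, hT3v,
        fderiv_const_mul dT2 Δt, ContinuousLinearMap.smul_apply, smul_eq_mul, hT2v]
    -- the force terms
    have expand : ∀ (A : Fin s → E N) (B : Fin m → Fin s → E N) (u : E N),
        ⟪Δt • ∑ i, α i • A i + ∑ r, Ihat r • ∑ i, β i • B r i, u⟫
          = Δt * ∑ i, α i * ⟪A i, u⟫ + ∑ r, Ihat r * ∑ i, β i * ⟪B r i, u⟫ := by
      intro A B u
      simp only [inner_add_left, real_inner_smul_left, sum_inner]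
    have eF : ⟪Fminus z, v.1⟫ + ⟪Fplus z, v.2⟫
        = Δt * ∑ i, α i * ⟪F (Q0 i z, P0 i z), fderiv ℝ (Q0 i) z v⟫
          + ∑ r, Ihat r * ∑ i, β i * ⟪f r (Qr r i z, Pr r i z), fderiv ℝ (Qr r i) z v⟫ := by
      rw [hFm z, hFp z, expand, expand]
      have hA : ∀ (W : E N × E N → E N), DifferentiableAt ℝ W z → ∀ (u : E N),
          ⟪(ContinuousLinearMap.adjoint (fderiv ℝ (fun x' => W (x', z.2)) z.1)) u, v.1⟫
            + ⟪(ContinuousLinearMap.adjoint (fderiv ℝ (fun y' => W (z.1, y')) z.2)) u, v.2⟫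
          = ⟪u, fderiv ℝ W z v⟫ := by
        intro W hW u
        rw [ContinuousLinearMap.adjoint_inner_left, ContinuousLinearMap.adjoint_inner_left,
          fderiv_partial1 W z hW, fderiv_partial2 W z hW,
          ContinuousLinearMap.comp_apply, ContinuousLinearMap.comp_apply,
          ContinuousLinearMap.inl_apply, ContinuousLinearMap.inr_apply,
          ← inner_add_right, ← map_add]
        norm_num
      have hsum1 : ∀ i, α i * ⟪(ContinuousLinearMap.adjoint
            (fderiv ℝ (fun x' => Q0 i (x', z.2)) z.1)) (F (Q0 i z, P0 i z)), v.1⟫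
          + α i * ⟪(ContinuousLinearMap.adjoint
            (fderiv ℝ (fun y' => Q0 i (z.1, y')) z.2)) (F (Q0 i z, P0 i z)), v.2⟫
          = α i * ⟪F (Q0 i z, P0 i z), fderiv ℝ (Q0 i) z v⟫ := fun i => by
        rw [← mul_add, hA (Q0 i) (hQ0d i) (F (Q0 i z, P0 i z))]
      have hsum2 : ∀ r i, β i * ⟪(ContinuousLinearMap.adjoint
            (fderiv ℝ (fun x' => Qr r i (x', z.2)) z.1)) (f r (Qr r i z, Pr r i z)), v.1⟫
          + β i * ⟪(ContinuousLinearMap.adjoint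
            (fderiv ℝ (fun y' => Qr r i (z.1, y')) z.2)) (f r (Qr r i z, Pr r i z)), v.2⟫
          = β i * ⟪f r (Qr r i z, Pr r i z), fderiv ℝ (Qr r i) z v⟫ := fun r i => by
        rw [← mul_add, hA (Qr r i) (hQrd r i) (f r (Qr r i z, Pr r i z))]
      calc Δt * ∑ i, α i * ⟪(ContinuousLinearMap.adjoint
              (fderiv ℝ (fun x' => Q0 i (x', z.2)) z.1)) (F (Q0 i z, P0 i z)), v.1⟫
            + ∑ r, Ihat r * ∑ i, β i * ⟪(ContinuousLinearMap.adjoint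
              (fderiv ℝ (fun x' => Qr r i (x', z.2)) z.1)) (f r (Qr r i z, Pr r i z)), v.1⟫
            + (Δt * ∑ i, α i * ⟪(ContinuousLinearMap.adjoint
              (fderiv ℝ (fun y' => Q0 i (z.1, y')) z.2)) (F (Q0 i z, P0 i z)), v.2⟫
            + ∑ r, Ihat r * ∑ i, β i * ⟪(ContinuousLinearMap.adjoint
              (fderiv ℝ (fun y' => Qr r i (z.1, y')) z.2)) (f r (Qr r i z, Pr r i z)), v.2⟫)
          = Δt * (∑ i, (α i * ⟪(ContinuousLinearMap.adjoint
              (fderiv ℝ (fun x' => Q0 i (x', z.2)) z.1)) (F (Q0 i z, P0 i z)), v.1⟫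
              + α i * ⟪(ContinuousLinearMap.adjoint
              (fderiv ℝ (fun y' => Q0 i (z.1, y')) z.2)) (F (Q0 i z, P0 i z)), v.2⟫))
            + ∑ r, Ihat r * (∑ i, (β i * ⟪(ContinuousLinearMap.adjoint
              (fderiv ℝ (fun x' => Qr r i (x', z.2)) z.1)) (f r (Qr r i z, Pr r i z)), v.1⟫
              + β i * ⟪(ContinuousLinearMap.adjoint
              (fderiv ℝ (fun y' => Qr r i (z.1, y')) z.2)) (f r (Qr r i z, Pr r i z)), v.2⟫)) := by
            simp only [Finset.sum_add_distrib, mul_add]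
            ring
        _ = _ := by
            rw [show (∑ i, (α i * ⟪(ContinuousLinearMap.adjoint
              (fderiv ℝ (fun x' => Q0 i (x', z.2)) z.1)) (F (Q0 i z, P0 i z)), v.1⟫
              + α i * ⟪(ContinuousLinearMap.adjoint
              (fderiv ℝ (fun y' => Q0 i (z.1, y')) z.2)) (F (Q0 i z, P0 i z)), v.2⟫))
              = ∑ i, α i * ⟪F (Q0 i z, P0 i z), fderiv ℝ (Q0 i) z v⟫
              from Finset.sum_congr rfl fun i _ => hsum1 i]
            congr 1
            refine Finset.sum_congr rfl fun r _ => ?_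
            congr 1
            exact Finset.sum_congr rfl fun i _ => hsum2 r i
    -- the core algebraic identity
    have hMA := main_algebra Δt Ihat a0 a1 b0 b1 b3 α β hc1 hc2 hc3 hc4
      (pminus z) v.1
      (fun i => -D1 H (Q0 i z) (P0 i z) + F (Q0 i z, P0 i z))
      (fun i => fderiv ℝ (fun w => D2 H (Q0 i w) (P0 i w)) z v)
      (fun r i => -D1 (h r) (Qr r i z) (Pr r i z) + f r (Qr r i z, Pr r i z))
      (fun r i => fderiv ℝ (fun w => D2 (h r) (Qr r i w) (Pr r i w)) z v)
      (fun i => P0 i z) (fun i => fderiv ℝ (Q0 i) z v)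
      (fun r i => Pr r i z) (fun r i => fderiv ℝ (Qr r i) z v)
      z.2 (fderiv ℝ qplus z v)
      (fun i => hP0 z hz i) (fun l i => hPl z hz l i) (hpp z hz)
      hdQv hdQrv hdqpv
    -- splitting off the force contributions
    have sA : ∑ i, α i * (⟪P0 i z, fderiv ℝ (fun w => D2 H (Q0 i w) (P0 i w)) z v⟫
          + ⟪-D1 H (Q0 i z) (P0 i z) + F (Q0 i z, P0 i z), fderiv ℝ (Q0 i) z v⟫)
        = ∑ i, α i * (⟪P0 i z, fderiv ℝ (fun w => D2 H (Q0 i w) (P0 i w)) z v⟫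
            - ⟪D1 H (Q0 i z) (P0 i z), fderiv ℝ (Q0 i) z v⟫)
          + ∑ i, α i * ⟪F (Q0 i z, P0 i z), fderiv ℝ (Q0 i) z v⟫ := by
      rw [← Finset.sum_add_distrib]
      refine Finset.sum_congr rfl fun i _ => ?_
      rw [inner_add_left, inner_neg_left]
      ring
    have sB : ∑ r, Ihat r * ∑ i, β i *
          (⟪Pr r i z, fderiv ℝ (fun w => D2 (h r) (Qr r i w) (Pr r i w)) z v⟫
            + ⟪-D1 (h r) (Qr r i z) (Pr r i z) + f r (Qr r i z, Pr r i z),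
                fderiv ℝ (Qr r i) z v⟫)
        = ∑ r, Ihat r * ∑ i, β i *
            (⟪Pr r i z, fderiv ℝ (fun w => D2 (h r) (Qr r i w) (Pr r i w)) z v⟫
              - ⟪D1 (h r) (Qr r i z) (Pr r i z), fderiv ℝ (Qr r i) z v⟫)
          + ∑ r, Ihat r * ∑ i, β i * ⟪f r (Qr r i z, Pr r i z), fderiv ℝ (Qr r i) z v⟫ := by
      rw [← Finset.sum_add_distrib]
      refine Finset.sum_congr rfl fun r _ => ?_
      rw [← mul_add, ← Finset.sum_add_distrib]
      congr 1
      refine Finset.sum_congr rfl fun i _ => ?_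
      rw [inner_add_left, inner_neg_left]
      ring
    rw [inner_add_left, inner_add_left]
    linear_combination eHd + hMA + Δt * sA + sB - real_inner_comm v.2 (qplus z) - eF

  constructor
  · refine ext_inner_right ℝ fun w => ?_
    rw [inner_D2 Hd z hHdd w, master (0, w)]
    simp
  · refine ext_inner_right ℝ fun w => ?_
    rw [inner_D1 Hd z hHdd w, master (w, 0)]
    simp

end Thm
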